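/- arXiv:1704.07336 — 2 statements merged into one kernel-verified Lean document; each statement's English description precedes it below -/
import Mathlib

section
/- With notation as above (Q1(x) = Σ_i x_i dτ(Y_i), T(k) := Σ_{i=1}^3 dτ(Y_i) Q1(x)^k dτ(Y_i)), the identity Σ_{i=1}^3 [dτ(Y_i), Q1(x)] Q1(x)^k [dτ(Y_i), Q1(x)] = |x|² T(k) − Q1(x)^{k+2} holds for every nonnegative integer k and every x ∈ R³. -/
/-- The matrix-valued polynomial `Q1(x) = Σ_i x_i dτ(Y_i)`, where `A i = dτ(Y_i)`. -/
noncomputable def Q1 {d : ℕ} (A : Fin 3 → Matrix (Fin d) (Fin d) ℂ) (x : Fin 3 → ℝ) :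
    Matrix (Fin d) (Fin d) ℂ :=
  ∑ i : Fin 3, (x i : ℂ) • A i

/-- `T(k) = Σ_i dτ(Y_i) Q1(x)^k dτ(Y_i)`. -/
noncomputable def T {d : ℕ} (A : Fin 3 → Matrix (Fin d) (Fin d) ℂ) (x : Fin 3 → ℝ)
    (k : ℕ) : Matrix (Fin d) (Fin d) ℂ :=
  ∑ i : Fin 3, A i * Q1 A x ^ k * A i

/-- `Σ_i [dτ(Y_i), Q1(x)] Q1(x)^k [dτ(Y_i), Q1(x)] = |x|² T(k) − Q1(x)^{k+2}`. -/
theorem stmt12 {d : ℕ} (A : Fin 3 → Matrix (Fin d) (Fin d) ℂ)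
    (h01 : A 0 * A 1 - A 1 * A 0 = A 2)
    (h12 : A 1 * A 2 - A 2 * A 1 = A 0)
    (h20 : A 2 * A 0 - A 0 * A 2 = A 1)
    (k : ℕ) (x : Fin 3 → ℝ) :
    ∑ i : Fin 3,
        (A i * Q1 A x - Q1 A x * A i) * Q1 A x ^ k * (A i * Q1 A x - Q1 A x * A i) =
      ((x 0 ^ 2 + x 1 ^ 2 + x 2 ^ 2 : ℝ) : ℂ) • T A x k - Q1 A x ^ (k + 2) := by
  have hm01 : A 0 * A 1 = A 2 + A 1 * A 0 := sub_eq_iff_eq_add.mp h01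
  have hm12 : A 1 * A 2 = A 0 + A 2 * A 1 := sub_eq_iff_eq_add.mp h12
  have hm20 : A 2 * A 0 = A 1 + A 0 * A 2 := sub_eq_iff_eq_add.mp h20
  have c0 : A 0 * Q1 A x - Q1 A x * A 0 = (x 1 : ℂ) • A 2 - (x 2 : ℂ) • A 1 := by
    simp only [Q1, Fin.sum_univ_three, mul_add, add_mul, mul_smul_comm, smul_mul_assoc,
      hm01, hm12, hm20]
    module
  have c1 : A 1 * Q1 A x - Q1 A x * A 1 = (x 2 : ℂ) • A 0 - (x 0 : ℂ) • A 2 := by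
    simp only [Q1, Fin.sum_univ_three, mul_add, add_mul, mul_smul_comm, smul_mul_assoc,
      hm01, hm12, hm20]
    module
  have c2 : A 2 * Q1 A x - Q1 A x * A 2 = (x 0 : ℂ) • A 1 - (x 1 : ℂ) • A 0 := by
    simp only [Q1, Fin.sum_univ_three, mul_add, add_mul, mul_smul_comm, smul_mul_assoc,
      hm01, hm12, hm20]
    module
  have hpow : Q1 A x ^ (k + 2) = Q1 A x * Q1 A x ^ k * Q1 A x := by
    rw [pow_succ, pow_succ']
  rw [Fin.sum_univ_three, c0, c1, c2, hpow]
  push_cast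
  simp only [T, Fin.sum_univ_three]
  set M := Q1 A x ^ k with hM
  simp only [Q1, Fin.sum_univ_three]
  simp only [mul_add, add_mul, sub_mul, mul_sub, smul_mul_assoc, mul_smul_comm, smul_smul,
    smul_sub, smul_add, mul_assoc]
  module
end

section
/- Define T(k) := Σ_{i=1}^3 dτ(Y_i) Q1^k dτ(Y_i), where Q1 = Q1(x) = Σ_i x_i dτ(Y_i), for a representation dτ of so(3). Then T satisfies the recursion T(k+2) − Q1 T(k+1) − T(k+1) Q1 + Q1 T(k) Q1 = −|x|² T(k) + Q1^{k+2} for all k ≥ 0. -/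
/-- The recursion
`T(k+2) − Q1 T(k+1) − T(k+1) Q1 + Q1 T(k) Q1 = −|x|² T(k) + Q1^{k+2}`. -/
theorem stmt13 {d : ℕ} (A : Fin 3 → Matrix (Fin d) (Fin d) ℂ)
    (h01 : A 0 * A 1 - A 1 * A 0 = A 2)
    (h12 : A 1 * A 2 - A 2 * A 1 = A 0)
    (h20 : A 2 * A 0 - A 0 * A 2 = A 1)
    (k : ℕ) (x : Fin 3 → ℝ) :
    T A x (k + 2) - Q1 A x * T A x (k + 1) - T A x (k + 1) * Q1 A x +
        Q1 A x * T A x k * Q1 A x =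
      -(((x 0 ^ 2 + x 1 ^ 2 + x 2 ^ 2 : ℝ) : ℂ) • T A x k) + Q1 A x ^ (k + 2) := by
  have h10 : A 1 * A 0 - A 0 * A 1 = -A 2 := by rw [← h01]; abel
  have h21 : A 2 * A 1 - A 1 * A 2 = -A 0 := by rw [← h12]; abel
  have h02 : A 0 * A 2 - A 2 * A 0 = -A 1 := by rw [← h20]; abel
  set C := Q1 A x with hCdef
  have hC : C = (x 0 : ℂ) • A 0 + ((x 1 : ℂ) • A 1 + (x 2 : ℂ) • A 2) := by
    simp [hCdef, Q1, Fin.sum_univ_three, add_assoc]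
  set P := C ^ k with hP
  have hT : ∀ m : ℕ, T A x m = A 0 * C ^ m * A 0 + A 1 * C ^ m * A 1 + A 2 * C ^ m * A 2 := by
    intro m; simp [T, Fin.sum_univ_three, hCdef, add_assoc]
  have hk1 : T A x (k + 1) = A 0 * (P * C) * A 0 + A 1 * (P * C) * A 1 + A 2 * (P * C) * A 2 := by
    rw [hT, hP, pow_succ]
  have hk1' : T A x (k + 1) = A 0 * (C * P) * A 0 + A 1 * (C * P) * A 1 + A 2 * (C * P) * A 2 := by
    rw [hT, hP, pow_succ']
  have hk2 : C ^ (k + 2) = C * P * C := by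
    rw [hP, pow_succ', pow_succ, mul_assoc]
  have D0 : A 0 * C - C * A 0 = (x 1 : ℂ) • A 2 - (x 2 : ℂ) • A 1 := by
    have e : A 0 * C - C * A 0 =
        (x 1 : ℂ) • (A 0 * A 1 - A 1 * A 0) + (x 2 : ℂ) • (A 0 * A 2 - A 2 * A 0) := by
      rw [hC]
      simp only [mul_add, add_mul, mul_smul_comm, smul_mul_assoc, smul_sub]
      abel
    rw [e, h01, h02]; simp [smul_neg]; abel
  have D1 : A 1 * C - C * A 1 = (x 2 : ℂ) • A 0 - (x 0 : ℂ) • A 2 := by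
    have e : A 1 * C - C * A 1 =
        (x 0 : ℂ) • (A 1 * A 0 - A 0 * A 1) + (x 2 : ℂ) • (A 1 * A 2 - A 2 * A 1) := by
      rw [hC]
      simp only [mul_add, add_mul, mul_smul_comm, smul_mul_assoc, smul_sub]
      abel
    rw [e, h10, h12]; simp [smul_neg]; abel
  have D2 : A 2 * C - C * A 2 = (x 0 : ℂ) • A 1 - (x 1 : ℂ) • A 0 := by
    have e : A 2 * C - C * A 2 =
        (x 0 : ℂ) • (A 2 * A 0 - A 0 * A 2) + (x 1 : ℂ) • (A 2 * A 1 - A 1 * A 2) := by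
      rw [hC]
      simp only [mul_add, add_mul, mul_smul_comm, smul_mul_assoc, smul_sub]
      abel
    rw [e, h20, h21]; simp [smul_neg]; abel
  have key : T A x (k + 2) - C * T A x (k + 1) - T A x (k + 1) * C + C * T A x k * C =
      -((A 0 * C - C * A 0) * P * (A 0 * C - C * A 0) +
        (A 1 * C - C * A 1) * P * (A 1 * C - C * A 1) +
        (A 2 * C - C * A 2) * P * (A 2 * C - C * A 2)) := by
    rw [hT (k + 2), hk2]
    nth_rewrite 1 [hk1]
    rw [hk1', hT k, ← hP]
    noncomm_ring
  rw [key, D0, D1, D2, hT, ← hP, hk2, hC]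
  push_cast
  simp only [sub_mul, mul_sub, add_mul, mul_add, smul_mul_assoc, mul_smul_comm, smul_smul,
    smul_add, smul_sub, neg_add, neg_sub, smul_neg, neg_neg]
  module
end
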